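/- For d ≥ 2 and each θ ∈ ℝ^d, the (d+1)×(d+1) Hermitian matrix Δ(θ) (identity top-left d×d block, entries −(1+e^{−iθ_j})/(2√d) in the last column, 1 in the corner) has eigenvalues 1 with multiplicity d−1 and 1 ∓ √((d+c₀)/(2d)) where c₀ = Σ_j cos θ_j; in particular the eigenvalue 1 is an eigenvalue of Δ(θ) for every θ. -/

import Mathlib

open Matrix Complex

lemma conj_mul_self_term (d : ℕ) (hd : 2 ≤ d) (x : ℝ) (y : ℂ)
    (hy : y = -(1 + Complex.exp (-Complex.I * x)) / (2 * Real.sqrt d)) :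
    (starRingEnd ℂ) y * y = (1 + (Real.cos x : ℂ)) / (2 * d) := by
  have hd0 : (0:ℝ) < d := by positivity
  have hsd : ((Real.sqrt d : ℝ) : ℂ) ≠ 0 :=
    Complex.ofReal_ne_zero.mpr (Real.sqrt_ne_zero'.mpr hd0)
  have hdd : ((Real.sqrt d : ℝ) : ℂ) * ((Real.sqrt d : ℝ) : ℂ) = (d:ℂ) := by
    rw [← Complex.ofReal_mul, Real.mul_self_sqrt hd0.le]
    norm_cast
  have e1 : Complex.exp (-Complex.I * x) = (Real.cos x : ℂ) - (Real.sin x : ℂ) * Complex.I := by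
    rw [show -Complex.I * (x : ℂ) = (-(x:ℂ)) * Complex.I by ring,
      Complex.exp_mul_I, Complex.cos_neg, Complex.sin_neg, ← Complex.ofReal_cos,
      ← Complex.ofReal_sin]
    ring
  have hab : ((Real.cos x : ℝ) : ℂ)^2 + ((Real.sin x : ℝ) : ℂ)^2 = 1 := by
    rw [← Complex.ofReal_pow, ← Complex.ofReal_pow, ← Complex.ofReal_add,
      Real.cos_sq_add_sin_sq]
    simp
  have hd0' : (d:ℂ) ≠ 0 := Nat.cast_ne_zero.mpr (by omega)
  rw [hy, e1]
  simp only [map_div₀, map_neg, _root_.map_add, map_sub, _root_.map_mul, _root_.map_one,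
    Complex.conj_ofReal, Complex.conj_I, map_ofNat]
  rw [div_mul_div_comm, div_eq_div_iff (by simp [hsd]) (by simp [hd0'])]
  linear_combination (2*(d:ℂ))*hab + (-(4:ℂ)*(1+(Real.cos x : ℂ)))*hdd
    + (-(2:ℂ)*(d:ℂ)*(Real.sin x : ℂ)^2)*Complex.I_sq

/-- For `d ≥ 2`, the fiber Laplacian `Δ(θ)` of the once-subdivided
`d`-dimensional lattice has eigenvalues `1` with multiplicity `d−1` and
`1 ∓ √((d+c₀)/(2d))`; in particular `1` is an eigenvalue for every `θ`. -/
theorem subdivided_lattice_fiber_eigenvalues (d : ℕ) (hd : 2 ≤ d) (θ : Fin d → ℝ)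
    (c₀ : ℝ) (hc₀ : c₀ = ∑ j, Real.cos (θ j))
    (y : Fin d → ℂ)
    (hy : ∀ j, y j = -(1 + Complex.exp (-Complex.I * θ j)) / (2 * Real.sqrt d))
    (Δ : Matrix (Fin d ⊕ Fin 1) (Fin d ⊕ Fin 1) ℂ)
    (hΔ : Δ = Matrix.fromBlocks 1
      (Matrix.of fun j (_ : Fin 1) => y j)
      (Matrix.of fun (_ : Fin 1) j => (starRingEnd ℂ) (y j)) 1)
    (s : ℝ) (hs : s = Real.sqrt (((d : ℝ) + c₀) / (2 * d))) :
    (∀ z : ℂ, (Δ - z • (1 : Matrix (Fin d ⊕ Fin 1) (Fin d ⊕ Fin 1) ℂ)).det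
      = (1 - z) ^ (d - 1) * (z - (1 - (s : ℂ))) * (z - (1 + (s : ℂ)))) ∧
    (Δ - (1 : Matrix (Fin d ⊕ Fin 1) (Fin d ⊕ Fin 1) ℂ)).det = 0 := by
  have hd0 : (0:ℝ) < d := by positivity
  have hd0' : (d:ℂ) ≠ 0 := Nat.cast_ne_zero.mpr (by omega)
  -- nonnegativity of (d + c₀)/(2d)
  have hc₀lb : -(d:ℝ) ≤ c₀ := by
    rw [hc₀]
    calc -(d:ℝ) = ∑ _j : Fin d, (-1 : ℝ) := by simp
    _ ≤ ∑ j, Real.cos (θ j) := Finset.sum_le_sum fun j _ => Real.neg_one_le_cos (θ j)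
  have hnn : 0 ≤ ((d:ℝ) + c₀) / (2 * d) := by
    apply div_nonneg (by linarith) (by linarith)
  have hs2 : (s:ℝ)^2 = ((d:ℝ) + c₀) / (2 * d) := by
    rw [hs, Real.sq_sqrt hnn]
  -- the sum of |y j|²
  have hsum : ∑ j, (starRingEnd ℂ) (y j) * y j = ((s:ℂ))^2 := by
    have : ∀ j ∈ Finset.univ, (starRingEnd ℂ) (y j) * y j
        = (1 + (Real.cos (θ j) : ℂ)) / (2 * d) :=
      fun j _ => conj_mul_self_term d hd (θ j) (y j) (hy j)
    rw [Finset.sum_congr rfl this, ← Finset.sum_div]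
    have : ((s:ℂ))^2 = (((s^2 : ℝ) : ℝ) : ℂ) := by push_cast; ring
    rw [this, hs2]
    push_cast [hc₀]
    rw [Finset.sum_add_distrib]
    simp [mul_comm]
  -- main determinant formula
  have key : ∀ z : ℂ, (Δ - z • (1 : Matrix (Fin d ⊕ Fin 1) (Fin d ⊕ Fin 1) ℂ)).det
      = (1 - z) ^ (d - 1) * (z - (1 - (s : ℂ))) * (z - (1 + (s : ℂ))) := by
    intro z
    have hblock : Δ - z • (1 : Matrix (Fin d ⊕ Fin 1) (Fin d ⊕ Fin 1) ℂ)
        = Matrix.fromBlocks ((1 - z) • 1)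
          (Matrix.of fun j (_ : Fin 1) => y j)
          (Matrix.of fun (_ : Fin 1) j => (starRingEnd ℂ) (y j)) ((1 - z) • 1) := by
      rw [hΔ]
      ext (i|i) (j|j) <;>
        simp [Matrix.sub_apply, Matrix.smul_apply, Matrix.one_apply, sub_smul,
          Matrix.fromBlocks_apply₁₁, Matrix.fromBlocks_apply₁₂,
          Matrix.fromBlocks_apply₂₁, Matrix.fromBlocks_apply₂₂]
    by_cases hz1 : z = 1
    · -- z = 1 : both sides vanish
      subst hz1
      rw [hblock]
      simp only [sub_self, zero_smul]
      rw [zero_pow (show d - 1 ≠ 0 by omega), zero_mul, zero_mul]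
      set M : Matrix (Fin d ⊕ Fin 1) (Fin d ⊕ Fin 1) ℂ :=
        Matrix.fromBlocks 0
          (Matrix.of fun j (_ : Fin 1) => y j)
          (Matrix.of fun (_ : Fin 1) j => (starRingEnd ℂ) (y j)) 0 with hM
      set i0 : Fin d := ⟨0, by omega⟩
      set i1 : Fin d := ⟨1, by omega⟩
      by_cases h0 : y i0 = 0
      · apply Matrix.det_eq_zero_of_row_eq_zero (Sum.inl i0)
        rintro (j|j) <;> simp [hM, h0]
      · have hne : (Sum.inl i1 : Fin d ⊕ Fin 1) ≠ Sum.inl i0 := by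
          simp [i0, i1, Fin.ext_iff]
        rw [← Matrix.det_updateRow_add_smul_self M hne (-(y i1 / y i0))]
        apply Matrix.det_eq_zero_of_row_eq_zero (Sum.inl i1)
        rintro (j|j) <;>
          simp [hM, Matrix.updateRow_self, Pi.add_apply, Pi.smul_apply, smul_eq_mul] <;>
          field_simp <;>
          ring
    · -- z ≠ 1 : Schur complement
      have hz : (1:ℂ) - z ≠ 0 := sub_ne_zero.mpr (Ne.symm hz1)
      haveI : Invertible ((1 - z) • (1 : Matrix (Fin d) (Fin d) ℂ)) :=
        ⟨(1 - z)⁻¹ • 1, by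
          rw [Matrix.smul_mul, Matrix.mul_smul, Matrix.mul_one, smul_smul,
            inv_mul_cancel₀ hz, one_smul], by
          rw [Matrix.smul_mul, Matrix.mul_smul, Matrix.mul_one, smul_smul,
            mul_inv_cancel₀ hz, one_smul]⟩
      have hinv : ⅟((1 - z) • (1 : Matrix (Fin d) (Fin d) ℂ)) = (1 - z)⁻¹ • 1 :=
        invOf_eq_right_inv (by
          rw [Matrix.smul_mul, Matrix.mul_smul, Matrix.mul_one, smul_smul,
            mul_inv_cancel₀ hz, one_smul])
      rw [hblock, Matrix.det_fromBlocks₁₁, hinv]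
      have hdetA : ((1 - z) • (1 : Matrix (Fin d) (Fin d) ℂ)).det = (1 - z) ^ d := by
        simp [Matrix.det_smul]
      have hdetD : ((1 - z) • (1 : Matrix (Fin 1) (Fin 1) ℂ)
          - (Matrix.of fun (_ : Fin 1) j => (starRingEnd ℂ) (y j))
            * ((1 - z)⁻¹ • (1 : Matrix (Fin d) (Fin d) ℂ))
            * (Matrix.of fun j (_ : Fin 1) => y j)).det
          = (1 - z) - (1 - z)⁻¹ * ((s:ℂ))^2 := by
        rw [Matrix.mul_smul, Matrix.mul_one, Matrix.smul_mul, Matrix.det_fin_one]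
        simp only [Matrix.sub_apply, Matrix.smul_apply, Matrix.one_apply_eq,
          smul_eq_mul, mul_one, Matrix.mul_apply, Matrix.of_apply]
        rw [← hsum, Finset.mul_sum]
      rw [hdetA, hdetD]
      obtain ⟨k, rfl⟩ : ∃ k, d = k + 1 := ⟨d - 1, by omega⟩
      have hk : k + 1 - 1 = k := by omega
      rw [hk, pow_succ]
      field_simp
      ring
  exact ⟨key, by
    have := key 1
    rw [one_smul] at this
    rw [this, sub_self, zero_pow (by omega)]
    ring⟩
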